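/- Let (f, 𝔣) be a pseudo-polynomial and G = {(g_i, 𝔤_i) : 1 ≤ i ≤ l} nonzero pseudo-polynomials over a Dedekind domain R. Then there exist a pseudo-polynomial (r, 𝔣), minimal with respect to G, and polynomials h_i ∈ (𝔤_i𝔣⁻¹)[x] such that (f,𝔣) reduces to (r,𝔣) modulo G, f − r = Σ_i h_i g_i, and deg(f) = max(max_i deg(h_i g_i), deg(r)). -/

import Mathlib

open MvPolynomial

attribute [local instance] MvPolynomial.algebraMvPolynomial

noncomputable def mdeg {σ : Type*} (m : MonomialOrder σ) {K : Type*} [CommSemiring K]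
    (f : MvPolynomial σ K) : σ →₀ ℕ :=
  m.toSyn.symm (f.support.sup fun d => m.toSyn d)

noncomputable def plc {σ : Type*} (m : MonomialOrder σ) {K : Type*} [CommSemiring K]
    (f : MvPolynomial σ K) : K :=
  f.coeff (mdeg m f)

/-- One step reduction of `(f, 𝔣)` to `(h, 𝔣)` with respect to the family of
pseudo-polynomials `(gᵢ, 𝔤ᵢ)`: there are `aᵢ ∈ 𝔤ᵢ 𝔣⁻¹`, supported on the set
`J = {i : LM(gᵢ) ∣ LM(f)}`, with `LC(f) = ∑ aᵢ LC(gᵢ)` and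
`h = f - ∑ aᵢ x^{deg f - deg gᵢ} gᵢ`. -/
def OneStep {R : Type*} [CommRing R] [IsDomain R] [IsDedekindDomain R] {n l : ℕ}
    (m : MonomialOrder (Fin n))
    (g : Fin l → MvPolynomial (Fin n) (FractionRing R))
    (𝔤 : Fin l → FractionalIdeal (nonZeroDivisors R) (FractionRing R))
    (𝔣 : FractionalIdeal (nonZeroDivisors R) (FractionRing R))
    (f h : MvPolynomial (Fin n) (FractionRing R)) : Prop :=
  ∃ a : Fin l → FractionRing R,
    (∀ i, a i ∈ 𝔤 i * 𝔣⁻¹) ∧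
    (∀ i, a i ≠ 0 → ∃ γ, mdeg m f = mdeg m (g i) + γ) ∧
    plc m f = ∑ i, a i * plc m (g i) ∧
    h = f - ∑ i, (monomial (mdeg m f - mdeg m (g i)) (a i)) * g i

open Classical in
/-- `(f, 𝔣)` can be reduced modulo the family `(gᵢ, 𝔤ᵢ)`:
`𝔣·LC(f) ⊆ ∑_{i ∈ J} 𝔤ᵢ·LC(gᵢ)` where `J = {i : LM(gᵢ) ∣ LM(f)}`. -/
noncomputable def Reducible {R : Type*} [CommRing R] [IsDomain R] [IsDedekindDomain R]
    {n l : ℕ} (m : MonomialOrder (Fin n))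
    (g : Fin l → MvPolynomial (Fin n) (FractionRing R))
    (𝔤 : Fin l → FractionalIdeal (nonZeroDivisors R) (FractionRing R))
    (𝔣 : FractionalIdeal (nonZeroDivisors R) (FractionRing R))
    (f : MvPolynomial (Fin n) (FractionRing R)) : Prop :=
  𝔣 * FractionalIdeal.spanSingleton (nonZeroDivisors R) (plc m f) ≤
    ∑ i ∈ Finset.univ.filter (fun i => ∃ γ, mdeg m f = mdeg m (g i) + γ),
      𝔤 i * FractionalIdeal.spanSingleton (nonZeroDivisors R) (plc m (g i))

section AuxLemmas

variable {σ : Type*} (m : MonomialOrder σ) {K : Type*} [CommSemiring K]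

lemma toSyn_mdeg (f : MvPolynomial σ K) :
    m.toSyn (mdeg m f) = f.support.sup (fun d => m.toSyn d) :=
  m.toSyn.apply_symm_apply _

lemma le_mdeg {f : MvPolynomial σ K} {d : σ →₀ ℕ} (h : f.coeff d ≠ 0) :
    m.toSyn d ≤ m.toSyn (mdeg m f) := by
  rw [toSyn_mdeg]
  exact Finset.le_sup (f := fun d => m.toSyn d) (MvPolynomial.mem_support_iff.mpr h)

lemma coeff_eq_zero_of_mdeg_lt {f : MvPolynomial σ K} {d : σ →₀ ℕ}
    (h : m.toSyn (mdeg m f) < m.toSyn d) : f.coeff d = 0 := by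
  by_contra hc
  exact absurd (le_mdeg m hc) (not_le.mpr h)

lemma mdeg_zero : mdeg m (0 : MvPolynomial σ K) = 0 := by
  simp [mdeg]

lemma syn_zero_le (a : m.syn) : (0 : m.syn) ≤ a := m.bot_eq_zero ▸ bot_le

lemma mdeg_mem_support {f : MvPolynomial σ K} (h : f ≠ 0) : mdeg m f ∈ f.support := by
  obtain ⟨d, hd, he⟩ := f.support.exists_mem_eq_sup
    (MvPolynomial.support_nonempty.mpr h) (fun d => m.toSyn d)
  have : mdeg m f = d := by
    rw [mdeg, he]; exact m.toSyn.symm_apply_apply d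
  rwa [this]

lemma plc_ne_zero {f : MvPolynomial σ K} (h : f ≠ 0) : plc m f ≠ 0 :=
  MvPolynomial.mem_support_iff.mp (mdeg_mem_support m h)

lemma mdeg_add_le (p q : MvPolynomial σ K) :
    m.toSyn (mdeg m (p + q)) ≤ m.toSyn (mdeg m p) ⊔ m.toSyn (mdeg m q) := by
  rw [toSyn_mdeg]
  apply Finset.sup_le
  intro d hd
  rw [MvPolynomial.mem_support_iff, MvPolynomial.coeff_add] at hd
  by_cases hp : p.coeff d = 0
  · have hq : q.coeff d ≠ 0 := fun h => hd (by rw [hp, h, add_zero])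
    exact le_sup_of_le_right (le_mdeg m hq)
  · exact le_sup_of_le_left (le_mdeg m hp)

lemma mdeg_sum_le {ι : Type*} (s : Finset ι) (p : ι → MvPolynomial σ K) :
    m.toSyn (mdeg m (∑ i ∈ s, p i)) ≤ s.sup (fun i => m.toSyn (mdeg m (p i))) := by
  classical
  induction s using Finset.cons_induction with
  | empty =>
    rw [Finset.sum_empty, mdeg_zero, map_zero, Finset.sup_empty, ← m.bot_eq_zero]
  | cons a s ha ih =>
    rw [Finset.sum_cons, Finset.sup_cons]
    exact (mdeg_add_le m _ _).trans (sup_le_sup le_rfl ih)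

lemma mdeg_monomial_mul_le (δ : σ →₀ ℕ) (a : K) (g : MvPolynomial σ K) :
    m.toSyn (mdeg m (monomial δ a * g)) ≤ m.toSyn (δ + mdeg m g) := by
  rw [toSyn_mdeg]
  apply Finset.sup_le
  intro e he
  rw [MvPolynomial.mem_support_iff, MvPolynomial.coeff_monomial_mul'] at he
  split_ifs at he with hle
  · have h2 : g.coeff (e - δ) ≠ 0 := fun h => he (by rw [h, mul_zero])
    have h3 : e = δ + (e - δ) := (add_tsub_cancel_of_le hle).symm
    rw [h3, map_add, map_add]
    exact add_le_add_right (le_mdeg m h2) _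
  · exact absurd rfl he

lemma coeff_monomial_mul_top {f g : MvPolynomial σ K} {γ : σ →₀ ℕ}
    (hγ : mdeg m f = mdeg m g + γ) (a : K) :
    (monomial (mdeg m f - mdeg m g) a * g).coeff (mdeg m f) = a * plc m g := by
  have hδ : mdeg m f - mdeg m g = γ := by rw [hγ, add_tsub_cancel_left]
  have hle : mdeg m f - mdeg m g ≤ mdeg m f := tsub_le_self
  rw [MvPolynomial.coeff_monomial_mul', if_pos hle, hδ, hγ, add_tsub_cancel_right]
  rfl

end AuxLemmas

lemma FractionalIdeal.zero_mem' {R : Type*} [CommRing R] {S : Submonoid R} {P : Type*}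
    [CommRing P] [Algebra R P] (I : FractionalIdeal S P) : (0 : P) ∈ I :=
  FractionalIdeal.mem_coe.mp ((I : Submodule R P).zero_mem)

lemma FractionalIdeal.add_mem' {R : Type*} [CommRing R] {S : Submonoid R} {P : Type*}
    [CommRing P] [Algebra R P] {I : FractionalIdeal S P} {x y : P} (hx : x ∈ I) (hy : y ∈ I) :
    x + y ∈ I :=
  FractionalIdeal.mem_coe.mp (add_mem (FractionalIdeal.mem_coe.mpr hx)
    (FractionalIdeal.mem_coe.mpr hy))

lemma FractionalIdeal.mem_finsetSum {R : Type*} [CommRing R] {S : Submonoid R} {P : Type*}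
    [CommRing P] [Algebra R P] {ι : Type*} [DecidableEq ι] (s : Finset ι)
    (I : ι → FractionalIdeal S P) {x : P} (hx : x ∈ ∑ i ∈ s, I i) :
    ∃ a : ι → P, (∀ i, a i ∈ I i) ∧ x = ∑ i ∈ s, a i := by
  induction s using Finset.induction_on generalizing x with
  | empty =>
    refine ⟨0, fun i => FractionalIdeal.zero_mem' _, ?_⟩
    rw [Finset.sum_empty] at hx ⊢
    exact (FractionalIdeal.mem_zero_iff S).mp hx
  | @insert j s hj IH =>
    rw [Finset.sum_insert hj, ← FractionalIdeal.mem_coe, FractionalIdeal.coe_add,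
      Submodule.add_eq_sup] at hx
    obtain ⟨y, hy, z, hz, rfl⟩ := Submodule.mem_sup.mp hx
    obtain ⟨a, ha, rfl⟩ := IH (FractionalIdeal.mem_coe.mp hz)
    refine ⟨Function.update a j y, fun i => ?_, ?_⟩
    · rcases eq_or_ne i j with rfl | hij
      · rw [Function.update_self]; exact FractionalIdeal.mem_coe.mp hy
      · rw [Function.update_of_ne hij]; exact ha i
    · rw [Finset.sum_insert hj, Function.update_self]
      congr 1
      exact (Finset.sum_congr rfl fun i hi =>
        Function.update_of_ne (ne_of_mem_of_not_mem hi hj) _ _).symm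

/-- For a pseudo-polynomial `(f, 𝔣)` and nonzero pseudo-polynomials
`G = {(gᵢ, 𝔤ᵢ)}` there exist a pseudo-polynomial `(r, 𝔣)` minimal w.r.t. `G` and
polynomials `hᵢ ∈ (𝔤ᵢ𝔣⁻¹)[x]` with `(f,𝔣) →_G+ (r,𝔣)`, `f − r = ∑ᵢ hᵢ gᵢ`, and
`deg f = max(maxᵢ deg(hᵢ gᵢ), deg r)`. -/
theorem stmt10 {R : Type*} [CommRing R] [IsDomain R] [IsDedekindDomain R] {n l : ℕ}
    (m : MonomialOrder (Fin n))
    (f : MvPolynomial (Fin n) (FractionRing R))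
    (𝔣 : FractionalIdeal (nonZeroDivisors R) (FractionRing R))
    (hf : f ≠ 0) (h𝔣 : 𝔣 ≠ 0)
    (hpf : ∀ c ∈ 𝔣, ∀ d, c * f.coeff d ∈
      (1 : FractionalIdeal (nonZeroDivisors R) (FractionRing R)))
    (g : Fin l → MvPolynomial (Fin n) (FractionRing R))
    (𝔤 : Fin l → FractionalIdeal (nonZeroDivisors R) (FractionRing R))
    (hg : ∀ i, g i ≠ 0) (h𝔤 : ∀ i, 𝔤 i ≠ 0)
    (hpg : ∀ i, ∀ c ∈ 𝔤 i, ∀ d, c * (g i).coeff d ∈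
      (1 : FractionalIdeal (nonZeroDivisors R) (FractionRing R))) :
    ∃ (r : MvPolynomial (Fin n) (FractionRing R))
      (hs : Fin l → MvPolynomial (Fin n) (FractionRing R)),
      Relation.ReflTransGen (OneStep m g 𝔤 𝔣) f r ∧
      (r = 0 ∨ ¬ Reducible m g 𝔤 𝔣 r) ∧
      (∀ i, ∀ d, (hs i).coeff d ∈ 𝔤 i * 𝔣⁻¹) ∧
      f - r = ∑ i, hs i * g i ∧
      m.toSyn (mdeg m f) =
        (Finset.univ.sup fun i => m.toSyn (mdeg m (hs i * g i))) ⊔ m.toSyn (mdeg m r) := by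
  classical
  suffices H : ∀ f : MvPolynomial (Fin n) (FractionRing R),
      ∃ (r : MvPolynomial (Fin n) (FractionRing R))
        (hs : Fin l → MvPolynomial (Fin n) (FractionRing R)),
        Relation.ReflTransGen (OneStep m g 𝔤 𝔣) f r ∧
        (r = 0 ∨ ¬ Reducible m g 𝔤 𝔣 r) ∧
        (∀ i, ∀ d, (hs i).coeff d ∈ 𝔤 i * 𝔣⁻¹) ∧
        f - r = ∑ i, hs i * g i ∧
        (∀ i, m.toSyn (mdeg m (hs i * g i)) ≤ m.toSyn (mdeg m f)) ∧
        m.toSyn (mdeg m r) ≤ m.toSyn (mdeg m f) by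
    obtain ⟨r, hs, h1, h2, h3, h4, h5, h6⟩ := H f
    refine ⟨r, hs, h1, h2, h3, h4,
      le_antisymm ?_ (sup_le (Finset.sup_le fun i _ => h5 i) h6)⟩
    have hfr : f = r + ∑ i, hs i * g i := by rw [← h4]; ring
    have hle := (mdeg_add_le m r (∑ i, hs i * g i)).trans
      (sup_le_sup le_rfl (mdeg_sum_le m Finset.univ (fun i => hs i * g i)))
    rw [← hfr] at hle
    exact hle.trans_eq (sup_comm _ _)
  suffices H2 : ∀ s : m.syn, ∀ f : MvPolynomial (Fin n) (FractionRing R),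
      m.toSyn (mdeg m f) = s →
      ∃ (r : MvPolynomial (Fin n) (FractionRing R))
        (hs : Fin l → MvPolynomial (Fin n) (FractionRing R)),
        Relation.ReflTransGen (OneStep m g 𝔤 𝔣) f r ∧
        (r = 0 ∨ ¬ Reducible m g 𝔤 𝔣 r) ∧
        (∀ i, ∀ d, (hs i).coeff d ∈ 𝔤 i * 𝔣⁻¹) ∧
        f - r = ∑ i, hs i * g i ∧
        (∀ i, m.toSyn (mdeg m (hs i * g i)) ≤ m.toSyn (mdeg m f)) ∧
        m.toSyn (mdeg m r) ≤ m.toSyn (mdeg m f) from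
    fun f => H2 _ f rfl
  intro s
  induction s using WellFoundedLT.induction with
  | _ s IH =>
  intro f hdeg
  by_cases hf0 : f = 0
  · subst hf0
    refine ⟨0, 0, Relation.ReflTransGen.refl, Or.inl rfl,
      fun i d => by simp only [Pi.zero_apply, MvPolynomial.coeff_zero]; exact FractionalIdeal.zero_mem' _,
      by simp, fun i => by simp, le_rfl⟩
  by_cases hred : Reducible m g 𝔤 𝔣 f
  swap
  · refine ⟨f, 0, Relation.ReflTransGen.refl, Or.inr hred,
      fun i d => by simp only [Pi.zero_apply, MvPolynomial.coeff_zero]; exact FractionalIdeal.zero_mem' _,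
      by simp, fun i => ?_, le_rfl⟩
    simp only [Pi.zero_apply, zero_mul, mdeg_zero, map_zero]
    exact syn_zero_le m _
  -- the reducible case : construct a one step reduction
  rw [Reducible] at hred
  have hspan : FractionalIdeal.spanSingleton (nonZeroDivisors R) (plc m f) ≤
      ∑ i ∈ Finset.univ.filter (fun i => ∃ γ, mdeg m f = mdeg m (g i) + γ),
        (𝔤 i * 𝔣⁻¹) * FractionalIdeal.spanSingleton (nonZeroDivisors R) (plc m (g i)) := by
    have h2 : 𝔣⁻¹ * (𝔣 * FractionalIdeal.spanSingleton (nonZeroDivisors R) (plc m f)) =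
        FractionalIdeal.spanSingleton (nonZeroDivisors R) (plc m f) := by
      rw [← mul_assoc, mul_comm 𝔣⁻¹ 𝔣, mul_inv_cancel₀ h𝔣, one_mul]
    calc FractionalIdeal.spanSingleton (nonZeroDivisors R) (plc m f)
        = 𝔣⁻¹ * (𝔣 * FractionalIdeal.spanSingleton (nonZeroDivisors R) (plc m f)) := h2.symm
      _ ≤ 𝔣⁻¹ * ∑ i ∈ Finset.univ.filter (fun i => ∃ γ, mdeg m f = mdeg m (g i) + γ),
            𝔤 i * FractionalIdeal.spanSingleton (nonZeroDivisors R) (plc m (g i)) :=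
          mul_le_mul_right hred _
      _ = _ := by
          rw [Finset.mul_sum]
          exact Finset.sum_congr rfl fun i _ => by ring
  have hc : plc m f ∈
      ∑ i ∈ Finset.univ.filter (fun i => ∃ γ, mdeg m f = mdeg m (g i) + γ),
        (𝔤 i * 𝔣⁻¹) * FractionalIdeal.spanSingleton (nonZeroDivisors R) (plc m (g i)) :=
    hspan (FractionalIdeal.mem_spanSingleton_self _ _)
  obtain ⟨x, hxmem, hsum⟩ := FractionalIdeal.mem_finsetSum _ _ hc
  have hx2 : ∀ i, ∃ y ∈ 𝔤 i * 𝔣⁻¹, x i = plc m (g i) * y := by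
    intro i
    have := hxmem i
    rw [mul_comm] at this
    exact FractionalIdeal.mem_singleton_mul.mp this
  choose b hb hxb using hx2
  set J : Finset (Fin l) :=
    Finset.univ.filter (fun i => ∃ γ, mdeg m f = mdeg m (g i) + γ) with hJ
  set a : Fin l → FractionRing R := fun i => if i ∈ J then b i else 0 with ha
  have ha1 : ∀ i, a i ∈ 𝔤 i * 𝔣⁻¹ := by
    intro i
    rw [ha]
    dsimp only
    split_ifs with h
    · exact hb i
    · exact FractionalIdeal.zero_mem' _
  have ha2 : ∀ i, a i ≠ 0 → ∃ γ, mdeg m f = mdeg m (g i) + γ := by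
    intro i hi
    by_cases hiJ : i ∈ J
    · exact (Finset.mem_filter.mp hiJ).2
    · exact absurd (by rw [ha]; simp [hiJ]) hi
  have ha3 : plc m f = ∑ i, a i * plc m (g i) := by
    rw [hsum]
    rw [show (∑ i, a i * plc m (g i)) =
        ∑ i, if i ∈ J then b i * plc m (g i) else 0 from
      Finset.sum_congr rfl fun i _ => by rw [ha]; dsimp only; split_ifs <;> simp]
    rw [Finset.sum_ite_mem, Finset.univ_inter]
    exact Finset.sum_congr rfl fun i hi => by rw [hxb i, mul_comm]
  set T : MvPolynomial (Fin n) (FractionRing R) :=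
    ∑ i, (monomial (mdeg m f - mdeg m (g i)) (a i)) * g i with hT
  have hA : ∀ i, m.toSyn (mdeg m ((monomial (mdeg m f - mdeg m (g i)) (a i)) * g i)) ≤
      m.toSyn (mdeg m f) := by
    intro i
    by_cases hai : a i = 0
    · rw [hai]
      simp only [MvPolynomial.monomial_zero, zero_mul, mdeg_zero, map_zero]
      exact syn_zero_le m _
    · obtain ⟨γ, hγ⟩ := ha2 i hai
      refine (mdeg_monomial_mul_le m _ _ _).trans (le_of_eq ?_)
      congr 1
      rw [hγ, add_tsub_cancel_left, add_comm]
  have hTle : m.toSyn (mdeg m T) ≤ m.toSyn (mdeg m f) := by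
    rw [hT]
    exact (mdeg_sum_le m _ _).trans (Finset.sup_le fun i _ => hA i)
  have hB : T.coeff (mdeg m f) = plc m f := by
    rw [hT, MvPolynomial.coeff_sum, ha3]
    apply Finset.sum_congr rfl
    intro i _
    by_cases hai : a i = 0
    · simp [hai]
    · obtain ⟨γ, hγ⟩ := ha2 i hai
      exact coeff_monomial_mul_top m hγ (a i)
  set h : MvPolynomial (Fin n) (FractionRing R) := f - T with hh
  have honestep : OneStep m g 𝔤 𝔣 f h := ⟨a, ha1, ha2, ha3, rfl⟩
  have hC : ∀ e, m.toSyn (mdeg m f) ≤ m.toSyn e → h.coeff e = 0 := by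
    intro e he
    rcases eq_or_lt_of_le he with heq | hlt
    · have he2 : e = mdeg m f := m.toSyn.injective heq.symm
      rw [hh, MvPolynomial.coeff_sub, he2, hB, sub_eq_zero]
      rfl
    · rw [hh, MvPolynomial.coeff_sub,
        coeff_eq_zero_of_mdeg_lt m hlt,
        coeff_eq_zero_of_mdeg_lt m (lt_of_le_of_lt hTle hlt), sub_zero]
  by_cases hh0 : h = 0
  · -- f = T, take r = 0
    refine ⟨0, fun i => monomial (mdeg m f - mdeg m (g i)) (a i), ?_, Or.inl rfl, ?_, ?_, ?_, ?_⟩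
    · exact Relation.ReflTransGen.single (hh0 ▸ honestep)
    · intro i d
      rw [MvPolynomial.coeff_monomial]
      split_ifs
      · exact ha1 i
      · exact FractionalIdeal.zero_mem' _
    · rw [sub_zero, ← hT]
      have := hh0
      rw [hh, sub_eq_zero] at this
      exact this
    · exact hA
    · rw [mdeg_zero, map_zero]; exact syn_zero_le m _
  · -- h ≠ 0 : strict decrease, use the inductive hypothesis
    have hlt : m.toSyn (mdeg m h) < m.toSyn (mdeg m f) := by
      by_contra hcon
      push_neg at hcon
      exact plc_ne_zero m hh0 (hC (mdeg m h) hcon)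
    obtain ⟨r, hs', k1, k2, k3, k4, k5, k6⟩ := IH (m.toSyn (mdeg m h)) (hdeg ▸ hlt) h rfl
    refine ⟨r, fun i => monomial (mdeg m f - mdeg m (g i)) (a i) + hs' i,
      Relation.ReflTransGen.head honestep k1, k2, ?_, ?_, ?_, k6.trans hlt.le⟩
    · intro i d
      rw [MvPolynomial.coeff_add]
      refine FractionalIdeal.add_mem' ?_ (k3 i d)
      rw [MvPolynomial.coeff_monomial]
      split_ifs
      · exact ha1 i
      · exact FractionalIdeal.zero_mem' _
    · have hfr : f - r = (f - h) + (h - r) := by ring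
      have hfh : f - h = T := by rw [hh]; ring
      rw [hfr, hfh, k4, hT, ← Finset.sum_add_distrib]
      exact Finset.sum_congr rfl fun i _ => (add_mul _ _ _).symm
    · intro i
      rw [add_mul]
      refine (mdeg_add_le m _ _).trans (sup_le (hA i) ((k5 i).trans hlt.le))
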